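/- Let μ_1 be a spherically symmetric probability distribution supported in B(0,1) ∩ L_1 for a d-dimensional subspace L_1 of R^D, with μ_1({0}) < 1, and let ψ(t) = μ_1({x : |x^T v| < t}) for a fixed unit vector v ∈ L_1 (independent of v by symmetry). Let L̂_1,...,L̂_K be d-subspaces with d_G(L_1, L̂_j) > ε for all j, where d_G is the principal-angle Grassmannian metric. Then E_{μ_1}[min_j dist(x, L̂_j)^p] > τ_0 ε^p, where τ_0 = (1 − μ_1({0})) · 2^{p−1} · ψ^{−1}((1 + (2K−1)μ_1({0}))/(2K))^p / (π√d)^p. -/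

import Mathlib

open scoped RealInnerProductSpace
noncomputable section

abbrev E (D : ℕ) := EuclideanSpace ℝ (Fin D)

/-- projection onto `L` as an endomorphism of `E D` -/
def projL {D : ℕ} (L : Submodule ℝ (E D)) : E D →ₗ[ℝ] E D :=
  L.subtype ∘ₗ (L.orthogonalProjectionOnto).toLinearMap

/-- projection matrix of `L` -/
def projMat {D : ℕ} (L : Submodule ℝ (E D)) : Matrix (Fin D) (Fin D) ℝ :=
  LinearMap.toMatrix (EuclideanSpace.basisFun (Fin D) ℝ).toBasis
    (EuclideanSpace.basisFun (Fin D) ℝ).toBasis (projL L)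

/-- eigenvalues of a matrix (0 if not Hermitian) -/
def eigs {D : ℕ} (M : Matrix (Fin D) (Fin D) ℝ) : Fin D → ℝ :=
  if h : M.IsHermitian then h.eigenvalues else 0

/-- the Grassmannian distance: the square root of the sum of the squares of the
principal angles between two `d`-dimensional subspaces.  The eigenvalues of
`P_F P_G P_F` are the `d` values `cos² θ_i` together with `D - d` zeros, so
`∑ arccos(√λ_i)² = ∑ θ_i² + (D-d)(π/2)²`. -/
def dG {D : ℕ} (d : ℕ) (F G : Submodule ℝ (E D)) : ℝ :=
  Real.sqrt (∑ i, (Real.arccos (Real.sqrt (eigs (projMat F * projMat G * projMat F) i))) ^ 2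
    - (D - d : ℝ) * (Real.pi / 2) ^ 2)


open scoped ENNReal

open Matrix MeasureTheory

namespace Aux
variable {D : ℕ}

lemma projL_mem (L : Submodule ℝ (E D)) (x : E D) : projL L x ∈ L := (L.orthogonalProjectionOnto x).2

lemma projL_of_mem {L : Submodule ℝ (E D)} {x : E D} (h : x ∈ L) : projL L x = x := by
  have h2 : (L.orthogonalProjectionOnto x : E D) = x := Submodule.starProjection_eq_self_iff.mpr h
  simpa [projL] using h2

lemma inner_projL (L : Submodule ℝ (E D)) (x y : E D) : ⟪projL L x, y⟫ = ⟪x, projL L y⟫ :=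
  L.inner_starProjection_left_eq_right x y

lemma toMatrix_mulVec (f : E D →ₗ[ℝ] E D) (y : E D) :
    (LinearMap.toMatrix (EuclideanSpace.basisFun (Fin D) ℝ).toBasis
      (EuclideanSpace.basisFun (Fin D) ℝ).toBasis f) *ᵥ ((WithLp.equiv 2 _) y)
      = (WithLp.equiv 2 _) (f y) := by
  have := LinearMap.toMatrix_mulVec_repr (EuclideanSpace.basisFun (Fin D) ℝ).toBasis
    (EuclideanSpace.basisFun (Fin D) ℝ).toBasis f y
  exact this

lemma toEuclideanLin_toMatrix (f : E D →ₗ[ℝ] E D) :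
    Matrix.toEuclideanLin (LinearMap.toMatrix (EuclideanSpace.basisFun (Fin D) ℝ).toBasis
      (EuclideanSpace.basisFun (Fin D) ℝ).toBasis f) = f := by
  apply LinearMap.ext; intro y
  rw [Matrix.toEuclideanLin_apply]
  have := toMatrix_mulVec f y
  simp only [WithLp.equiv_apply] at this
  rw [this]

lemma projMat_mul (F G : Submodule ℝ (E D)) :
    projMat F * projMat G * projMat F
      = LinearMap.toMatrix (EuclideanSpace.basisFun (Fin D) ℝ).toBasis
        (EuclideanSpace.basisFun (Fin D) ℝ).toBasis (projL F ∘ₗ projL G ∘ₗ projL F) := by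
  rw [LinearMap.toMatrix_comp (EuclideanSpace.basisFun (Fin D) ℝ).toBasis
    (EuclideanSpace.basisFun (Fin D) ℝ).toBasis (EuclideanSpace.basisFun (Fin D) ℝ).toBasis,
    LinearMap.toMatrix_comp (EuclideanSpace.basisFun (Fin D) ℝ).toBasis
    (EuclideanSpace.basisFun (Fin D) ℝ).toBasis (EuclideanSpace.basisFun (Fin D) ℝ).toBasis,
    mul_assoc]
  rfl

lemma isSymm_fgf (F G : Submodule ℝ (E D)) : (projL F ∘ₗ projL G ∘ₗ projL F).IsSymmetric := by
  intro x y
  simp only [LinearMap.comp_apply]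
  rw [inner_projL F, inner_projL G, inner_projL F]

lemma isHermitian_M (F G : Submodule ℝ (E D)) :
    (projMat F * projMat G * projMat F).IsHermitian := by
  rw [projMat_mul, Matrix.isHermitian_iff_isSymmetric, toEuclideanLin_toMatrix]
  exact isSymm_fgf F G

end Aux
namespace Aux
variable {D : ℕ}

lemma inner_repr {ι V : Type*} [Fintype ι] [NormedAddCommGroup V] [InnerProductSpace ℝ V]
    (b : OrthonormalBasis ι ℝ V) (y z : V) :
    ⟪y, z⟫ = ∑ i, b.repr y i * b.repr z i := by
  have h := b.repr.inner_map_map y z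
  rw [PiLp.inner_apply] at h
  simp only [RCLike.inner_apply, conj_trivial] at h
  rw [← h]; exact Finset.sum_congr rfl fun i _ => mul_comm _ _

lemma sym_expand {n : ℕ} {V : Type*} [NormedAddCommGroup V] [InnerProductSpace ℝ V]
    [FiniteDimensional ℝ V] {T : V →ₗ[ℝ] V} (hT : T.IsSymmetric)
    (hn : Module.finrank ℝ V = n) (y : V) :
    ⟪T y, y⟫ = ∑ i, hT.eigenvalues hn i * (((hT.eigenvectorBasis hn).repr y i) ^ 2) := by
  have h1 : ∀ i, (hT.eigenvectorBasis hn).repr (T y) i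
      = hT.eigenvalues hn i * (hT.eigenvectorBasis hn).repr y i := by
    intro i
    rw [OrthonormalBasis.repr_apply_apply, OrthonormalBasis.repr_apply_apply,
      ← hT ((hT.eigenvectorBasis hn) i) y, hT.apply_eigenvectorBasis hn i,
      real_inner_smul_left]
    norm_cast
  rw [inner_repr (hT.eigenvectorBasis hn)]
  refine Finset.sum_congr rfl fun i _ => ?_
  rw [h1 i]; ring

lemma norm_sq_repr {n : ℕ} {V : Type*} [Fintype (Fin n)] [NormedAddCommGroup V]
    [InnerProductSpace ℝ V] (b : OrthonormalBasis (Fin n) ℝ V) (y : V) :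
    ‖y‖ ^ 2 = ∑ i, (b.repr y i) ^ 2 := by
  rw [← real_inner_self_eq_norm_sq, inner_repr b]
  refine Finset.sum_congr rfl fun i _ => by ring

/-- `⟪P_L z, z⟫ = ‖P_L z‖²` -/
lemma inner_projL_self (L : Submodule ℝ (E D)) (z : E D) :
    ⟪projL L z, z⟫ = ‖projL L z‖ ^ 2 := by
  have h0 : ⟪z - projL L z, projL L z⟫ = 0 :=
    Submodule.starProjection_inner_eq_zero z _ (projL_mem L z)
  have : ⟪projL L z, z - projL L z⟫ = 0 := by rw [real_inner_comm]; exact h0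
  have h1 : ⟪projL L z, z⟫ = ⟪projL L z, projL L z⟫ + ⟪projL L z, z - projL L z⟫ := by
    rw [← inner_add_right]; congr 1; abel
  rw [h1, this, add_zero, real_inner_self_eq_norm_sq]

lemma inner_projL_le (L : Submodule ℝ (E D)) (z : E D) :
    ⟪projL L z, z⟫ ≤ ‖z‖ ^ 2 := by
  rw [inner_projL_self]
  have h2 : ‖projL L z‖ ≤ ‖z‖ := by
    rcases eq_or_lt_of_le (norm_nonneg (projL L z)) with h | h
    · simp [← h]
    · have := real_inner_le_norm (projL L z) z
      rw [inner_projL_self] at this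
      nlinarith
  have := norm_nonneg (projL L z)
  nlinarith

/-- the symmetric operator `y ↦ P_{L₁}(P_{Lh} y)` on `L₁` -/
def Tmap (L₁ Lh : Submodule ℝ (E D)) : L₁ →ₗ[ℝ] L₁ :=
  ((L₁.orthogonalProjectionOnto).toLinearMap ∘ₗ projL Lh) ∘ₗ L₁.subtype

lemma Tmap_coe (L₁ Lh : Submodule ℝ (E D)) (y : L₁) :
    ((Tmap L₁ Lh y : L₁) : E D) = projL L₁ (projL Lh (y : E D)) := rfl

lemma inner_Tmap (L₁ Lh : Submodule ℝ (E D)) (y z : L₁) :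
    ⟪Tmap L₁ Lh y, z⟫ = ⟪projL Lh (y : E D), (z : E D)⟫ := by
  rw [Submodule.coe_inner, Tmap_coe, inner_projL L₁, projL_of_mem z.2]

lemma isSymm_Tmap (L₁ Lh : Submodule ℝ (E D)) : (Tmap L₁ Lh).IsSymmetric := by
  intro y z
  calc ⟪Tmap L₁ Lh y, z⟫ = ⟪projL Lh (y : E D), (z : E D)⟫ := inner_Tmap L₁ Lh y z
    _ = ⟪(y : E D), projL Lh (z : E D)⟫ := by rw [← inner_projL]
    _ = ⟪projL Lh (z : E D), (y : E D)⟫ := real_inner_comm _ _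
    _ = ⟪Tmap L₁ Lh z, y⟫ := (inner_Tmap L₁ Lh z y).symm
    _ = ⟪y, Tmap L₁ Lh z⟫ := real_inner_comm _ _

end Aux
namespace Aux
open Matrix
variable {D d : ℕ}

section Geom
variable (L₁ Lh : Submodule ℝ (E D))

/-- the sandwiched projection as endomorphism -/
def fmap : E D →ₗ[ℝ] E D := projL L₁ ∘ₗ projL Lh ∘ₗ projL L₁

lemma eigs_eq : eigs (projMat L₁ * projMat Lh * projMat L₁)
    = (isHermitian_M L₁ Lh).eigenvalues := dif_pos _

lemma fmap_range (x : E D) : fmap L₁ Lh x ∈ L₁ := projL_mem _ _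

lemma fmap_of_mem {x : E D} (hx : x ∈ L₁) :
    fmap L₁ Lh x = ((Tmap L₁ Lh ⟨x, hx⟩ : L₁) : E D) := by
  rw [Tmap_coe]
  simp only [fmap, LinearMap.comp_apply, projL_of_mem hx]

lemma inner_fmap {x : E D} (hx : x ∈ L₁) :
    ⟪fmap L₁ Lh x, x⟫ = ⟪Tmap L₁ Lh ⟨x, hx⟩, (⟨x, hx⟩ : L₁)⟫ := by
  rw [fmap_of_mem L₁ Lh hx]; rfl

lemma fmap_eigen (i : Fin D) :
    fmap L₁ Lh ((isHermitian_M L₁ Lh).eigenvectorBasis i)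
      = (isHermitian_M L₁ Lh).eigenvalues i • ((isHermitian_M L₁ Lh).eigenvectorBasis i) := by
  have h := (isHermitian_M L₁ Lh).mulVec_eigenvectorBasis i
  apply (WithLp.equiv 2 (Fin D → ℝ)).injective
  have h2 := toMatrix_mulVec (fmap L₁ Lh) ((isHermitian_M L₁ Lh).eigenvectorBasis i)
  rw [show LinearMap.toMatrix (EuclideanSpace.basisFun (Fin D) ℝ).toBasis
      (EuclideanSpace.basisFun (Fin D) ℝ).toBasis (fmap L₁ Lh)
      = projMat L₁ * projMat Lh * projMat L₁ from (projMat_mul L₁ Lh).symm] at h2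
  calc (WithLp.equiv 2 (Fin D → ℝ)) (fmap L₁ Lh ((isHermitian_M L₁ Lh).eigenvectorBasis i))
      = (projMat L₁ * projMat Lh * projMat L₁)
        *ᵥ (WithLp.equiv 2 (Fin D → ℝ)) ((isHermitian_M L₁ Lh).eigenvectorBasis i) := h2.symm
    _ = (isHermitian_M L₁ Lh).eigenvalues i
        • (WithLp.equiv 2 (Fin D → ℝ)) ((isHermitian_M L₁ Lh).eigenvectorBasis i) := h
    _ = (WithLp.equiv 2 (Fin D → ℝ))
        ((isHermitian_M L₁ Lh).eigenvalues i • (isHermitian_M L₁ Lh).eigenvectorBasis i) := rfl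

end Geom
end Aux
namespace Aux
open Matrix
variable {D d : ℕ}

lemma arccos_antitone {x y : ℝ} (h : x ≤ y) : Real.arccos y ≤ Real.arccos x := by
  simp only [Real.arccos]
  have := Real.monotone_arcsin h
  linarith

section Geom2
variable (L₁ Lh : Submodule ℝ (E D)) (hL₁ : Module.finrank ℝ L₁ = d)

lemma coe_norm (y : L₁) : ‖(y : E D)‖ = ‖y‖ := rfl

lemma mu_eq (i : Fin d) :
    (isSymm_Tmap L₁ Lh).eigenvalues hL₁ i
      = ⟪projL Lh (((isSymm_Tmap L₁ Lh).eigenvectorBasis hL₁ i : L₁) : E D),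
          (((isSymm_Tmap L₁ Lh).eigenvectorBasis hL₁ i : L₁) : E D)⟫ := by
  rw [← inner_Tmap L₁ Lh]
  rw [(isSymm_Tmap L₁ Lh).apply_eigenvectorBasis hL₁ i, real_inner_smul_left]
  have hn : ‖(isSymm_Tmap L₁ Lh).eigenvectorBasis hL₁ i‖ = 1 :=
    ((isSymm_Tmap L₁ Lh).eigenvectorBasis hL₁).orthonormal.1 i
  rw [real_inner_self_eq_norm_sq, hn]
  norm_num

lemma mu_nonneg (i : Fin d) : 0 ≤ (isSymm_Tmap L₁ Lh).eigenvalues hL₁ i := by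
  rw [mu_eq L₁ Lh hL₁ i, inner_projL_self]
  positivity

lemma mu_le_one (i : Fin d) : (isSymm_Tmap L₁ Lh).eigenvalues hL₁ i ≤ 1 := by
  rw [mu_eq L₁ Lh hL₁ i]
  have h := inner_projL_le Lh (((isSymm_Tmap L₁ Lh).eigenvectorBasis hL₁ i : L₁) : E D)
  have hn : ‖(((isSymm_Tmap L₁ Lh).eigenvectorBasis hL₁ i : L₁) : E D)‖ = 1 := by
    rw [coe_norm]
    exact ((isSymm_Tmap L₁ Lh).eigenvectorBasis hL₁).orthonormal.1 i
  rw [hn] at h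
  simpa using h

lemma rayleigh_lower {c : ℝ} (hc : ∀ i, c ≤ (isSymm_Tmap L₁ Lh).eigenvalues hL₁ i) (y : L₁) :
    c * ‖y‖ ^ 2 ≤ ⟪Tmap L₁ Lh y, y⟫ := by
  rw [sym_expand (isSymm_Tmap L₁ Lh) hL₁ y, norm_sq_repr ((isSymm_Tmap L₁ Lh).eigenvectorBasis hL₁) y,
    Finset.mul_sum]
  exact Finset.sum_le_sum fun i _ => mul_le_mul_of_nonneg_right (hc i) (sq_nonneg _)

lemma rank_M (k : Fin d) (hk : ∀ i, (isSymm_Tmap L₁ Lh).eigenvalues hL₁ k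
      ≤ (isSymm_Tmap L₁ Lh).eigenvalues hL₁ i)
    (hkpos : 0 < (isSymm_Tmap L₁ Lh).eigenvalues hL₁ k) :
    (projMat L₁ * projMat Lh * projMat L₁).rank = d := by
  classical
  have hinj : Function.Injective (fmap L₁ Lh ∘ₗ L₁.subtype) := by
    rw [← LinearMap.ker_eq_bot, LinearMap.ker_eq_bot']
    intro y hy
    have hy' : fmap L₁ Lh (y : E D) = 0 := hy
    have h2 : ⟪Tmap L₁ Lh y, y⟫ = 0 := by
      have := inner_fmap L₁ Lh y.2
      rw [hy'] at this
      simp only [Subtype.coe_eta] at this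
      rw [← this, inner_zero_left]
    have h3 := rayleigh_lower L₁ Lh hL₁ hk y
    rw [h2] at h3
    have h4 : ‖y‖ = 0 := by
      by_contra h0
      have hpos : 0 < ‖y‖ := lt_of_le_of_ne (norm_nonneg y) (Ne.symm h0)
      nlinarith [mul_pos hkpos (pow_pos hpos 2)]
    exact norm_eq_zero.mp h4
  have h3 : Module.finrank ℝ (LinearMap.range (fmap L₁ Lh ∘ₗ L₁.subtype)) = d := by
    rw [LinearMap.finrank_range_of_inj hinj, hL₁]
  have h4 : LinearMap.range (fmap L₁ Lh ∘ₗ L₁.subtype) ≤ LinearMap.range (fmap L₁ Lh) :=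
    LinearMap.range_comp_le_range _ _
  have h5 : LinearMap.range (fmap L₁ Lh) ≤ L₁ := by
    rintro x ⟨z, rfl⟩
    exact fmap_range L₁ Lh z
  have h6 : Module.finrank ℝ (LinearMap.range (fmap L₁ Lh)) = d :=
    le_antisymm (hL₁ ▸ Submodule.finrank_mono h5) (h3 ▸ Submodule.finrank_mono h4)
  have hMV : (projMat L₁ * projMat Lh * projMat L₁).mulVecLin
      = ((WithLp.linearEquiv 2 ℝ (Fin D → ℝ)).toLinearMap.comp
        ((fmap L₁ Lh).comp (WithLp.linearEquiv 2 ℝ (Fin D → ℝ)).symm.toLinearMap)) := by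
    apply LinearMap.ext
    intro x
    have h := toMatrix_mulVec (fmap L₁ Lh) ((WithLp.equiv 2 (Fin D → ℝ)).symm x)
    rw [show LinearMap.toMatrix (EuclideanSpace.basisFun (Fin D) ℝ).toBasis
      (EuclideanSpace.basisFun (Fin D) ℝ).toBasis (fmap L₁ Lh)
      = projMat L₁ * projMat Lh * projMat L₁ from (projMat_mul L₁ Lh).symm] at h
    exact h
  rw [Matrix.rank, hMV, LinearMap.range_comp, LinearMap.range_comp_of_range_eq_top _
    (LinearEquiv.range _), ← h6]
  exact LinearEquiv.finrank_map_eq _ _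

set_option maxHeartbeats 1000000 in
lemma eig_lower (k : Fin d)
    (hk : ∀ i, (isSymm_Tmap L₁ Lh).eigenvalues hL₁ k ≤ (isSymm_Tmap L₁ Lh).eigenvalues hL₁ i)
    (i : Fin D) (hi : (isHermitian_M L₁ Lh).eigenvalues i ≠ 0) :
    (isSymm_Tmap L₁ Lh).eigenvalues hL₁ k ≤ (isHermitian_M L₁ Lh).eigenvalues i := by
  set lam := (isHermitian_M L₁ Lh).eigenvalues i with hlam
  set w : E D := (isHermitian_M L₁ Lh).eigenvectorBasis i with hw
  have hfw : fmap L₁ Lh w = lam • w := fmap_eigen L₁ Lh i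
  have hwmem : w ∈ L₁ := by
    have h : w = lam⁻¹ • fmap L₁ Lh w := by
      rw [hfw, smul_smul, inv_mul_cancel₀ hi, one_smul]
    rw [h]
    exact L₁.smul_mem _ (fmap_range L₁ Lh w)
  have hnorm : ‖w‖ = 1 := (isHermitian_M L₁ Lh).eigenvectorBasis.orthonormal.1 i
  have h1 : ⟪fmap L₁ Lh w, w⟫ = lam := by
    rw [hfw, real_inner_smul_left, real_inner_self_eq_norm_sq, hnorm]
    norm_num
  have h2 := inner_fmap L₁ Lh hwmem
  have h3 := rayleigh_lower L₁ Lh hL₁ hk ⟨w, hwmem⟩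
  have h4 : ‖(⟨w, hwmem⟩ : L₁)‖ = 1 := hnorm
  rw [h4] at h3
  rw [h1] at h2
  rw [← h2] at h3
  simpa using h3

end Geom2
end Aux
namespace Aux
open Matrix Real
variable {D d : ℕ}

section Geom3
variable (L₁ Lh : Submodule ℝ (E D)) (hL₁ : Module.finrank ℝ L₁ = d)

lemma dG_le (k : Fin d)
    (hk : ∀ i, (isSymm_Tmap L₁ Lh).eigenvalues hL₁ k ≤ (isSymm_Tmap L₁ Lh).eigenvalues hL₁ i) :
    dG d L₁ Lh ≤ Real.sqrt d * Real.arccos (Real.sqrt ((isSymm_Tmap L₁ Lh).eigenvalues hL₁ k)) := by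
  classical
  set m := (isSymm_Tmap L₁ Lh).eigenvalues hL₁ k with hm
  set θ := Real.arccos (Real.sqrt m) with hθ
  set lam := (isHermitian_M L₁ Lh).eigenvalues with hlam
  have hθ0 : 0 ≤ θ := Real.arccos_nonneg _
  have hsum : ∑ i : Fin D, (Real.arccos (Real.sqrt (lam i))) ^ 2
      ≤ d * θ ^ 2 + ((D : ℝ) - d) * (Real.pi / 2) ^ 2 := by
    rcases eq_or_lt_of_le (mu_nonneg L₁ Lh hL₁ k) with hm0 | hmpos
    · -- m = 0, θ = π/2
      have hθpi : θ = Real.pi / 2 := by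
        rw [hθ, show m = 0 from hm0.symm, Real.sqrt_zero, Real.arccos_zero]
      have : ∀ i : Fin D, (Real.arccos (Real.sqrt (lam i))) ^ 2 ≤ (Real.pi / 2) ^ 2 := by
        intro i
        have h1 : Real.arccos (Real.sqrt (lam i)) ≤ Real.pi / 2 :=
          Real.arccos_le_pi_div_two.2 (Real.sqrt_nonneg _)
        have h2 : 0 ≤ Real.arccos (Real.sqrt (lam i)) := Real.arccos_nonneg _
        nlinarith
      calc ∑ i : Fin D, (Real.arccos (Real.sqrt (lam i))) ^ 2
          ≤ ∑ _i : Fin D, (Real.pi / 2) ^ 2 := Finset.sum_le_sum fun i _ => this i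
        _ = (D : ℝ) * (Real.pi / 2) ^ 2 := by simp [Finset.sum_const, nsmul_eq_mul]
        _ = d * θ ^ 2 + ((D : ℝ) - d) * (Real.pi / 2) ^ 2 := by rw [hθpi]; ring
    · -- m > 0
      have hrank := rank_M L₁ Lh hL₁ k hk hmpos
      have hcard : (Finset.univ.filter (fun i => lam i ≠ 0)).card = d := by
        rw [← Fintype.card_subtype]
        rw [← (isHermitian_M L₁ Lh).rank_eq_card_non_zero_eigs]
        exact hrank
      have hdD : d ≤ D := by
        calc d = (Finset.univ.filter (fun i => lam i ≠ 0)).card := hcard.symm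
          _ ≤ Finset.univ.card := Finset.card_filter_le _ _
          _ = D := by simp
      have hsplit := Finset.sum_filter_add_sum_filter_not Finset.univ (fun i => lam i ≠ 0)
        (fun i => (Real.arccos (Real.sqrt (lam i))) ^ 2)
      have h1 : ∑ i ∈ Finset.univ.filter (fun i => lam i ≠ 0),
          (Real.arccos (Real.sqrt (lam i))) ^ 2 ≤ d * θ ^ 2 := by
        have : ∀ i ∈ Finset.univ.filter (fun i => lam i ≠ 0),
            (Real.arccos (Real.sqrt (lam i))) ^ 2 ≤ θ ^ 2 := by
          intro i hi
          have hne : lam i ≠ 0 := (Finset.mem_filter.1 hi).2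
          have hge : m ≤ lam i := eig_lower L₁ Lh hL₁ k hk i hne
          have h3 : Real.arccos (Real.sqrt (lam i)) ≤ θ :=
            arccos_antitone (Real.sqrt_le_sqrt hge)
          have h4 : 0 ≤ Real.arccos (Real.sqrt (lam i)) := Real.arccos_nonneg _
          nlinarith
        calc ∑ i ∈ Finset.univ.filter (fun i => lam i ≠ 0),
            (Real.arccos (Real.sqrt (lam i))) ^ 2
            ≤ ∑ _i ∈ Finset.univ.filter (fun i => lam i ≠ 0), θ ^ 2 :=
              Finset.sum_le_sum this
          _ = d * θ ^ 2 := by rw [Finset.sum_const, hcard]; simp [nsmul_eq_mul]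
      have hcard2 : (Finset.univ.filter (fun i => ¬ lam i ≠ 0)).card = D - d := by
        have hsum2 := Finset.card_filter_add_card_filter_not
          (s := (Finset.univ : Finset (Fin D))) (p := fun i => lam i ≠ 0)
        rw [hcard, Finset.card_univ, Fintype.card_fin] at hsum2
        omega
      have h2 : ∑ i ∈ Finset.univ.filter (fun i => ¬ lam i ≠ 0),
          (Real.arccos (Real.sqrt (lam i))) ^ 2 = ((D : ℝ) - d) * (Real.pi / 2) ^ 2 := by
        have hterm : ∀ i ∈ Finset.univ.filter (fun i => ¬ lam i ≠ 0),
            (Real.arccos (Real.sqrt (lam i))) ^ 2 = (Real.pi / 2) ^ 2 := by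
          intro i hi
          have h0 : lam i = 0 := not_not.mp (Finset.mem_filter.1 hi).2
          rw [h0, Real.sqrt_zero, Real.arccos_zero]
        rw [Finset.sum_congr rfl hterm, Finset.sum_const, hcard2]
        rw [nsmul_eq_mul, Nat.cast_sub hdD]
      linarith [hsplit.symm.le, h1, h2.le, h2.ge]
  rw [dG, eigs_eq]
  have hstep : ∑ i : Fin D, (Real.arccos (Real.sqrt (lam i))) ^ 2
      - ((D : ℝ) - d) * (Real.pi / 2) ^ 2 ≤ d * θ ^ 2 := by linarith
  calc Real.sqrt (∑ i : Fin D, (Real.arccos (Real.sqrt (lam i))) ^ 2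
        - ((D : ℝ) - d) * (Real.pi / 2) ^ 2)
      ≤ Real.sqrt ((d : ℝ) * θ ^ 2) := Real.sqrt_le_sqrt hstep
    _ = Real.sqrt d * θ := by
        rw [Real.sqrt_mul (by positivity), Real.sqrt_sq hθ0]

end Geom3
end Aux
namespace Aux
open Matrix Real
variable {D d : ℕ}

lemma infDist_eq (Lh : Submodule ℝ (E D)) (x : E D) :
    Metric.infDist x (Lh : Set (E D)) = ‖x - projL Lh x‖ := by
  rw [Metric.infDist_eq_iInf]
  simp only [dist_eq_norm]
  exact (Submodule.starProjection_minimal (U := Lh) x).symm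

theorem geom (hd : 0 < d) (L₁ Lh : Submodule ℝ (E D)) (hL₁ : Module.finrank ℝ L₁ = d) :
    ∃ u : E D, ‖u‖ = 1 ∧ u ∈ L₁ ∧ ∀ x ∈ L₁,
      2 / (Real.pi * Real.sqrt d) * dG d L₁ Lh * |⟪x, u⟫| ≤ Metric.infDist x (Lh : Set (E D)) := by
  classical
  obtain ⟨k, -, hk⟩ := Finset.exists_min_image (Finset.univ : Finset (Fin d))
    ((isSymm_Tmap L₁ Lh).eigenvalues hL₁) ⟨⟨0, hd⟩, Finset.mem_univ _⟩
  have hk' : ∀ i, (isSymm_Tmap L₁ Lh).eigenvalues hL₁ k ≤ (isSymm_Tmap L₁ Lh).eigenvalues hL₁ i :=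
    fun i => hk i (Finset.mem_univ i)
  set b := (isSymm_Tmap L₁ Lh).eigenvectorBasis hL₁ with hb
  set m := (isSymm_Tmap L₁ Lh).eigenvalues hL₁ k with hmdef
  refine ⟨((b k : L₁) : E D), ?_, (b k).2, ?_⟩
  · rw [coe_norm]; exact b.orthonormal.1 k
  intro x hx
  set u : E D := ((b k : L₁) : E D)
  have hm0 : 0 ≤ m := mu_nonneg L₁ Lh hL₁ k
  have hm1 : m ≤ 1 := mu_le_one L₁ Lh hL₁ k
  -- step 1: (1-m) ⟪x,u⟫² ≤ ‖x - P x‖²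
  have key : (1 - m) * ⟪x, u⟫ ^ 2 ≤ ‖x - projL Lh x‖ ^ 2 := by
    have h0 : ⟪x - projL Lh x, projL Lh x⟫ = 0 :=
      Submodule.starProjection_inner_eq_zero x _ (projL_mem Lh x)
    have e1 : ‖x - projL Lh x‖ ^ 2 = ⟪x, x⟫ - ⟪projL Lh x, x⟫ := by
      rw [← real_inner_self_eq_norm_sq, inner_sub_right, h0, sub_zero, inner_sub_left]
    set x' : L₁ := ⟨x, hx⟩ with hx'
    have e2 : ⟪projL Lh x, x⟫ = ∑ i, (isSymm_Tmap L₁ Lh).eigenvalues hL₁ i * (b.repr x' i) ^ 2 := by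
      rw [← sym_expand (isSymm_Tmap L₁ Lh) hL₁ x']
      exact (inner_Tmap L₁ Lh x' x').symm
    have e3 : ⟪x, x⟫ = ∑ i, (b.repr x' i) ^ 2 := by
      have hnx : ‖x‖ = ‖x'‖ := rfl
      rw [real_inner_self_eq_norm_sq, hnx, norm_sq_repr b x']
    have e4 : b.repr x' k = ⟪x, u⟫ := by
      rw [OrthonormalBasis.repr_apply_apply, real_inner_comm]
      rfl
    have e6 : (1 - m) * (b.repr x' k) ^ 2
        ≤ ∑ i, (1 - (isSymm_Tmap L₁ Lh).eigenvalues hL₁ i) * (b.repr x' i) ^ 2 :=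
      Finset.single_le_sum (f := fun i => (1 - (isSymm_Tmap L₁ Lh).eigenvalues hL₁ i)
        * (b.repr x' i) ^ 2) (fun i _ =>
          mul_nonneg (by linarith [mu_le_one L₁ Lh hL₁ i]) (sq_nonneg _))
        (Finset.mem_univ k)
    rw [e1, e2, e3, ← e4]
    calc (1 - m) * (b.repr x' k) ^ 2
        ≤ ∑ i, (1 - (isSymm_Tmap L₁ Lh).eigenvalues hL₁ i) * (b.repr x' i) ^ 2 := e6
      _ = ∑ i, (b.repr x' i) ^ 2
          - ∑ i, (isSymm_Tmap L₁ Lh).eigenvalues hL₁ i * (b.repr x' i) ^ 2 := by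
          rw [← Finset.sum_sub_distrib]
          exact Finset.sum_congr rfl fun i _ => by ring
  have key2 : Real.sqrt (1 - m) * |⟪x, u⟫| ≤ ‖x - projL Lh x‖ := by
    calc Real.sqrt (1 - m) * |⟪x, u⟫| = Real.sqrt ((1 - m) * ⟪x, u⟫ ^ 2) := by
          rw [Real.sqrt_mul (by linarith), Real.sqrt_sq_eq_abs]
      _ ≤ Real.sqrt (‖x - projL Lh x‖ ^ 2) := Real.sqrt_le_sqrt key
      _ = ‖x - projL Lh x‖ := Real.sqrt_sq (norm_nonneg _)
  have hθmem : Real.arccos (Real.sqrt m) ≤ Real.pi / 2 :=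
    Real.arccos_le_pi_div_two.2 (Real.sqrt_nonneg _)
  have hjordan : 2 / Real.pi * Real.arccos (Real.sqrt m) ≤ Real.sqrt (1 - m) := by
    have := Real.mul_le_sin (Real.arccos_nonneg (Real.sqrt m)) hθmem
    rwa [Real.sin_arccos, Real.sq_sqrt hm0] at this
  have hdG := dG_le L₁ Lh hL₁ k hk'
  have hdG0 : 0 ≤ dG d L₁ Lh := Real.sqrt_nonneg _
  have hπ : 0 < Real.pi := Real.pi_pos
  have hsd : 0 < Real.sqrt d := Real.sqrt_pos.2 (by exact_mod_cast hd)
  rw [infDist_eq]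
  have habs : 0 ≤ |⟪x, u⟫| := abs_nonneg _
  calc 2 / (Real.pi * Real.sqrt d) * dG d L₁ Lh * |⟪x, u⟫|
      ≤ 2 / (Real.pi * Real.sqrt d) * (Real.sqrt d * Real.arccos (Real.sqrt m)) * |⟪x, u⟫| := by
        apply mul_le_mul_of_nonneg_right _ habs
        apply mul_le_mul_of_nonneg_left hdG (by positivity)
    _ = 2 / Real.pi * Real.arccos (Real.sqrt m) * |⟪x, u⟫| := by
        field_simp
    _ ≤ Real.sqrt (1 - m) * |⟪x, u⟫| := mul_le_mul_of_nonneg_right hjordan habs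
    _ ≤ ‖x - projL Lh x‖ := key2

end Aux
namespace Aux
open Matrix Real
variable {D d : ℕ}

lemma rot (hd : 0 < d) (L₁ : Submodule ℝ (E D)) (hL₁ : Module.finrank ℝ L₁ = d)
    {v u : E D} (hv : ‖v‖ = 1) (hvm : v ∈ L₁) (hu : ‖u‖ = 1) (hum : u ∈ L₁) :
    ∃ R : E D ≃ₗᵢ[ℝ] E D, (∀ y ∈ L₁, R y ∈ L₁) ∧ (∀ y ∈ L₁ᗮ, R y = y) ∧ R v = u := by
  classical
  set B₂ := stdOrthonormalBasis ℝ (L₁ᗮ : Submodule ℝ (E D)) with hB₂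
  set k0 : Fin d := ⟨0, hd⟩
  have hcard : Fintype.card (Fin d ⊕ Fin (Module.finrank ℝ (L₁ᗮ : Submodule ℝ (E D))))
      = Module.finrank ℝ (E D) := by
    have h1 := Submodule.finrank_add_finrank_orthogonal L₁
    rw [Fintype.card_sum, Fintype.card_fin, Fintype.card_fin, ← h1, hL₁]
  have mk : ∀ w : E D, ‖w‖ = 1 → w ∈ L₁ → ∃ OB : OrthonormalBasis (Fin d ⊕ Fin (Module.finrank ℝ (L₁ᗮ : Submodule ℝ (E D)))) ℝ (E D),
      OB (Sum.inl k0) = w ∧ (∀ i, OB (Sum.inl i) ∈ L₁) ∧ (∀ j, OB (Sum.inr j) = (B₂ j : E D))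
      ∧ (∀ y ∈ L₁, ∃ c : Fin d → ℝ, y = ∑ i, c i • OB (Sum.inl i)) := by
    intro w hw hwm
    set w' : L₁ := ⟨w, hwm⟩ with hw'
    have hwnorm : ‖w'‖ = 1 := hw
    have hfr : Module.finrank ℝ L₁ = Fintype.card (Fin d) := by simp [hL₁]
    have hon : Orthonormal ℝ (Set.restrict {k0} (fun _ : Fin d => w')) := by
      constructor
      · intro i; exact hwnorm
      · intro i j hij
        exact absurd (Subtype.ext (i.2.trans j.2.symm)) hij
    obtain ⟨Bw, hBw⟩ := hon.exists_orthonormalBasis_extension_of_card_eq hfr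
    have hBwk0 : Bw k0 = w' := hBw k0 rfl
    set g : (Fin d ⊕ Fin (Module.finrank ℝ (L₁ᗮ : Submodule ℝ (E D)))) → E D := Sum.elim (fun i => ((Bw i : L₁) : E D))
      (fun j => ((B₂ j : L₁ᗮ) : E D)) with hg
    have hong : Orthonormal ℝ g := by
      constructor
      · rintro (i | j)
        · exact Bw.orthonormal.1 i
        · exact B₂.orthonormal.1 j
      · rintro (i | j) (i' | j') hij
        · have hne : i ≠ i' := fun h => hij (by rw [h])
          exact Bw.orthonormal.2 hne
        · exact Submodule.inner_right_of_mem_orthogonal (Bw i).2 (B₂ j').2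
        · exact Submodule.inner_left_of_mem_orthogonal (Bw i').2 (B₂ j).2
        · have hne : j ≠ j' := fun h => hij (by rw [h])
          exact B₂.orthonormal.2 hne
    haveI : Nonempty (Fin d ⊕ Fin (Module.finrank ℝ (L₁ᗮ : Submodule ℝ (E D)))) :=
      ⟨Sum.inl k0⟩
    set OB : OrthonormalBasis (Fin d ⊕ Fin (Module.finrank ℝ (L₁ᗮ : Submodule ℝ (E D)))) ℝ (E D) :=
      (basisOfOrthonormalOfCardEqFinrank hong hcard).toOrthonormalBasis
        (by rw [coe_basisOfOrthonormalOfCardEqFinrank]; exact hong) with hOB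
    have hOBfun : ⇑OB = g := by
      rw [hOB, Module.Basis.coe_toOrthonormalBasis, coe_basisOfOrthonormalOfCardEqFinrank]
    have hOBg : ∀ i, OB i = g i := fun i => congrFun hOBfun i
    refine ⟨OB, ?_, ?_, ?_, ?_⟩
    · rw [hOBg, hg]; simp [hBwk0, hw']
    · intro i; rw [hOBg]; exact (Bw i).2
    · intro j; rw [hOBg]; rfl
    · intro y hy
      refine ⟨fun i => Bw.repr ⟨y, hy⟩ i, ?_⟩
      have hsum := congrArg (Submodule.subtype L₁) (Bw.sum_repr ⟨y, hy⟩)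
      simp only [map_sum, _root_.map_smul, Submodule.subtype_apply] at hsum
      simp only [hOBg, hg, Sum.elim_inl]
      exact hsum.symm
  obtain ⟨Bv, hBv0, hBvL, hBv2, hBvspan⟩ := mk v hv hvm
  obtain ⟨Bu, hBu0, hBuL, hBu2, _⟩ := mk u hu hum
  set R : E D ≃ₗᵢ[ℝ] E D := Bv.repr.trans Bu.repr.symm with hR
  have hmap : ∀ i, R (Bv i) = Bu i := by
    intro i
    rw [hR, LinearIsometryEquiv.trans_apply, Bv.repr_self, Bu.repr_symm_single]
  refine ⟨R, ?_, ?_, ?_⟩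
  · intro y hy
    obtain ⟨c, rfl⟩ := hBvspan y hy
    rw [map_sum]
    apply Submodule.sum_mem
    intro i _
    rw [_root_.map_smul, hmap]
    exact L₁.smul_mem _ (hBuL i)
  · intro y hy
    have hyspan : ∃ c : Fin (Module.finrank ℝ (L₁ᗮ : Submodule ℝ (E D))) → ℝ, y = ∑ j, c j • ((B₂ j : L₁ᗮ) : E D) := by
      refine ⟨fun j => B₂.repr ⟨y, hy⟩ j, ?_⟩
      have hsum := congrArg (Submodule.subtype L₁ᗮ) (B₂.sum_repr ⟨y, hy⟩)
      simp only [map_sum, _root_.map_smul, Submodule.subtype_apply] at hsum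
      exact hsum.symm
    obtain ⟨c, rfl⟩ := hyspan
    rw [map_sum]
    refine Finset.sum_congr rfl fun j _ => ?_
    have hfix : R ((B₂ j : E D)) = (B₂ j : E D) := by
      have h := hmap (Sum.inr j)
      rwa [hBv2, hBu2] at h
    rw [_root_.map_smul, hfix]
  · rw [← hBv0, hmap, hBu0]
end Aux


open MeasureTheory

/-- if `μ₁` is a spherically symmetric probability distribution supported in
`B(0,1) ∩ L₁` with `μ₁({0}) < 1`, and every `L̂_j` is at `d_G`-distance more than `ε` from
`L₁`, then `E_{μ₁}[min_j dist(x, L̂_j)^p] > τ₀ ε^p`. -/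
theorem lp_energy_lower_bound
    (D d K : ℕ) (hd : 0 < d) (hdD : d < D) (hK : 0 < K)
    (p ε : ℝ) (hp : 0 < p) (hε : 0 ≤ ε)
    (L₁ : Submodule ℝ (E D)) (hL₁ : Module.finrank ℝ L₁ = d)
    (μ₁ : Measure (E D)) [IsProbabilityMeasure μ₁]
    (hsupp : μ₁ ((Metric.closedBall (0 : E D) 1 ∩ (L₁ : Set (E D)))ᶜ) = 0)
    (hsph : ∀ R : E D ≃ₗᵢ[ℝ] E D, (∀ y ∈ L₁, R y ∈ L₁) →
      (∀ y, y ∈ L₁ᗮ → R y = y) → μ₁.map R = μ₁)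
    (hzero : (μ₁ {0}).toReal < 1)
    (v : E D) (hv : ‖v‖ = 1) (hvmem : v ∈ L₁)
    (s : ℝ)
    (hs : (μ₁ {x : E D | |(inner ℝ x v : ℝ)| < s}).toReal
      = (1 + (2 * (K : ℝ) - 1) * (μ₁ {(0 : E D)}).toReal) / (2 * K))
    (Lhat : Fin K → Submodule ℝ (E D))
    (hrank : ∀ j, Module.finrank ℝ (Lhat j) = d)
    (hfar : ∀ j, ε < dG d L₁ (Lhat j)) :
    ((1 - (μ₁ {(0 : E D)}).toReal) * (2 : ℝ) ^ (p - 1) * s ^ p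
        / (Real.pi * Real.sqrt d) ^ p) * ε ^ p
      < ∫ x, (⨅ j, Metric.infDist x (Lhat j : Set (E D))) ^ p ∂μ₁ := by
  classical
  haveI : Nonempty (Fin K) := ⟨⟨0, hK⟩⟩
  set μ₀ := (μ₁ {(0 : E D)}).toReal with hμ₀
  have hμ₀0 : 0 ≤ μ₀ := ENNReal.toReal_nonneg
  have hKpos : (0:ℝ) < 2 * K := by positivity
  -- s is positive
  have hs_pos : 0 < s := by
    by_contra hcon
    push_neg at hcon
    have hempty : {x : E D | |(inner ℝ x v : ℝ)| < s} = ∅ := by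
      ext x
      simp only [Set.mem_setOf_eq, Set.mem_empty_iff_false, iff_false, not_lt]
      exact le_trans hcon (abs_nonneg _)
    rw [hempty] at hs
    simp only [measure_empty, ENNReal.toReal_zero] at hs
    have h2 : 0 < (1 + (2 * (K : ℝ) - 1) * μ₀) / (2 * K) := by
      apply div_pos _ hKpos
      have h3 : (1:ℝ) ≤ K := by exact_mod_cast hK
      nlinarith
    rw [← hs] at h2
    exact lt_irrefl _ h2
  -- choose directions
  choose uvec hunorm humem hukey using fun j => Aux.geom hd L₁ (Lhat j) hL₁
  set A : E D → Set (E D) := fun w => {x : E D | |(inner ℝ x w : ℝ)| < s} with hA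
  have hAmeas : ∀ w, MeasurableSet (A w) := by
    intro w
    have hc : Continuous fun x : E D => |(inner ℝ x w : ℝ)| :=
      (continuous_id.inner continuous_const).abs
    exact (isOpen_lt hc continuous_const).measurableSet
  have h0mem : ∀ w, (0 : E D) ∈ A w := by
    intro w
    simp only [hA, Set.mem_setOf_eq, inner_zero_left, abs_zero]
    exact hs_pos
  have hAj : ∀ j, μ₁ (A (uvec j)) = μ₁ (A v) := by
    intro j
    obtain ⟨R, hRL, hRperp, hRv⟩ := Aux.rot hd L₁ hL₁ hv hvmem (hunorm j) (humem j)
    have hmap := hsph R hRL (fun y hy => hRperp y hy)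
    have hpre : (⇑R) ⁻¹' (A (uvec j)) = A v := by
      ext x
      simp only [hA, Set.mem_preimage, Set.mem_setOf_eq]
      rw [← hRv, R.inner_map_map]
    calc μ₁ (A (uvec j)) = (μ₁.map R) (A (uvec j)) := by rw [hmap]
      _ = μ₁ ((⇑R) ⁻¹' (A (uvec j))) := Measure.map_apply R.continuous.measurable (hAmeas _)
      _ = μ₁ (A v) := by rw [hpre]
  -- ENNReal measure bookkeeping
  set z := μ₁ {(0 : E D)} with hz
  have hzfin : z ≠ ⊤ := measure_ne_top μ₁ _
  have hψfin : μ₁ (A v) ≠ ⊤ := measure_ne_top μ₁ _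
  have hzψ : z ≤ μ₁ (A v) := by
    apply measure_mono
    intro x hx
    rw [Set.mem_singleton_iff] at hx
    subst hx
    exact h0mem v
  set S : Set (E D) := Metric.closedBall (0 : E D) 1 ∩ (L₁ : Set (E D)) with hS
  have hSmeas : MeasurableSet S :=
    (Metric.isClosed_closedBall.inter (Submodule.closed_of_finiteDimensional L₁)).measurableSet
  have hS1 : μ₁ S = 1 := by
    have h := measure_add_measure_compl (μ := μ₁) hSmeas
    rwa [hsupp, add_zero, measure_univ] at h
  set Bad : Set (E D) := ⋃ j, A (uvec j) with hBad
  have hBadmeas : MeasurableSet Bad := MeasurableSet.iUnion fun j => hAmeas _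
  set Good : Set (E D) := S \ Bad with hGood
  have hGoodmeas : MeasurableSet Good := hSmeas.diff hBadmeas
  have hBadle : μ₁ Bad ≤ z + K * (μ₁ (A v) - z) := by
    have hsub : Bad ⊆ {(0:E D)} ∪ ⋃ j, (A (uvec j) \ {(0:E D)}) := by
      intro x hx
      rcases Set.mem_iUnion.1 hx with ⟨j, hj⟩
      by_cases hx0 : x = (0:E D)
      · left; simp [hx0]
      · right; exact Set.mem_iUnion.2 ⟨j, hj, hx0⟩
    calc μ₁ Bad ≤ μ₁ ({(0:E D)} ∪ ⋃ j, (A (uvec j) \ {(0:E D)})) := measure_mono hsub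
      _ ≤ μ₁ {(0:E D)} + μ₁ (⋃ j, (A (uvec j) \ {(0:E D)})) := measure_union_le _ _
      _ ≤ z + ∑' j, μ₁ (A (uvec j) \ {(0:E D)}) := add_le_add le_rfl (measure_iUnion_le _)
      _ = z + ∑ j, μ₁ (A (uvec j) \ {(0:E D)}) := by rw [tsum_fintype]
      _ = z + ∑ _j : Fin K, (μ₁ (A v) - z) := by
          congr 1
          refine Finset.sum_congr rfl fun j _ => ?_
          rw [measure_diff ?_ ?_ ?_]
          · rw [hAj j]
          · intro x hx
            rw [Set.mem_singleton_iff] at hx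
            subst hx
            exact h0mem _
          · exact (measurableSet_singleton (0:E D)).nullMeasurableSet
          · exact measure_ne_top μ₁ _
      _ = z + K * (μ₁ (A v) - z) := by
          rw [Finset.sum_const, Finset.card_univ, Fintype.card_fin, nsmul_eq_mul]
  have hψr : (μ₁ (A v)).toReal = (1 + (2*(K:ℝ)-1)*μ₀)/(2*K) := hs
  have hdiffr : (μ₁ (A v) - z).toReal = (1 - μ₀)/(2*K) := by
    rw [ENNReal.toReal_sub_of_le hzψ hψfin, hψr, ← hμ₀]
    field_simp
    ring
  have hXfin : z + (K:ℝ≥0∞) * (μ₁ (A v) - z) ≠ ⊤ := by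
    apply ENNReal.add_ne_top.2
    constructor
    · exact hzfin
    · exact ENNReal.mul_ne_top (by simp) (ENNReal.sub_ne_top hψfin)
  have hXr : (z + (K:ℝ≥0∞) * (μ₁ (A v) - z)).toReal = (1+μ₀)/2 := by
    rw [ENNReal.toReal_add hzfin (ENNReal.mul_ne_top (by simp) (ENNReal.sub_ne_top hψfin)),
      ENNReal.toReal_mul, hdiffr, ENNReal.toReal_natCast, ← hμ₀]
    have hK0 : (K:ℝ) ≠ 0 := by positivity
    field_simp
    ring
  have hGoodlb : (1 - μ₀)/2 ≤ (μ₁ Good).toReal := by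
    have hBad1 : μ₁ Bad ≤ 1 := prob_le_one
    have h2 : μ₁ S - μ₁ Bad ≤ μ₁ Good := le_measure_diff
    rw [hS1] at h2
    have h3 : (1 - μ₁ Bad).toReal ≤ (μ₁ Good).toReal :=
      ENNReal.toReal_mono (measure_ne_top _ _) h2
    rw [ENNReal.toReal_sub_of_le hBad1 ENNReal.one_ne_top, ENNReal.toReal_one] at h3
    have h4 : (μ₁ Bad).toReal ≤ (1+μ₀)/2 := by
      rw [← hXr]
      exact ENNReal.toReal_mono hXfin hBadle
    linarith
  -- the analytic side
  obtain ⟨j₀, -, hj₀⟩ := Finset.exists_min_image (Finset.univ : Finset (Fin K))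
    (fun j => dG d L₁ (Lhat j)) ⟨⟨0, hK⟩, Finset.mem_univ _⟩
  have hδε : ε < dG d L₁ (Lhat j₀) := hfar j₀
  have hδpos : 0 < dG d L₁ (Lhat j₀) := lt_of_le_of_lt hε hδε
  have hcpos : 0 < 2 / (Real.pi * Real.sqrt d) :=
    div_pos two_pos (mul_pos Real.pi_pos (Real.sqrt_pos.2 (by exact_mod_cast hd)))
  set c : ℝ := 2 / (Real.pi * Real.sqrt d) with hc
  set g : E D → ℝ := fun x => ⨅ j, Metric.infDist x (Lhat j : Set (E D)) with hg
  have hg0 : ∀ x, 0 ≤ g x := fun x => Real.iInf_nonneg fun j => Metric.infDist_nonneg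
  have hbdd : ∀ x, BddBelow (Set.range fun j => Metric.infDist x (Lhat j : Set (E D))) := by
    intro x
    refine ⟨0, ?_⟩
    rintro r ⟨j, rfl⟩
    exact Metric.infDist_nonneg
  have hgc : Continuous g := by
    have h1 : g = fun x => Finset.univ.inf' Finset.univ_nonempty
        (fun j => Metric.infDist x (Lhat j : Set (E D))) := by
      funext x
      rw [Finset.inf'_univ_eq_ciInf]
    rw [h1]
    exact Continuous.finset_inf'_apply Finset.univ_nonempty
      (fun j _ => Metric.continuous_infDist_pt _)
  have hgb : ∀ x ∈ S, g x ≤ 1 := by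
    intro x hx
    have h2 : Metric.infDist x (Lhat j₀ : Set (E D)) ≤ dist x 0 :=
      Metric.infDist_le_dist_of_mem (Submodule.zero_mem _)
    have h3 : dist x 0 ≤ 1 := by simpa [Metric.mem_closedBall] using hx.1
    exact le_trans (ciInf_le (hbdd x) j₀) (le_trans h2 h3)
  set f : E D → ℝ := fun x => (g x) ^ p with hf
  have hfc : Continuous f := by
    apply hgc.rpow_const
    intro x
    right
    exact hp.le
  have hfnn : ∀ x, 0 ≤ f x := fun x => Real.rpow_nonneg (hg0 x) p
  have haeS : ∀ᵐ x ∂μ₁, x ∈ S := mem_ae_iff.mpr hsupp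
  have hfint : Integrable f μ₁ := by
    apply Integrable.mono' (integrable_const (1:ℝ)) hfc.aestronglyMeasurable
    filter_upwards [haeS] with x hx
    rw [Real.norm_eq_abs, abs_of_nonneg (hfnn x)]
    exact Real.rpow_le_one (hg0 x) (hgb x hx) hp.le
  have hkey : ∀ x ∈ Good, c * dG d L₁ (Lhat j₀) * s ≤ g x := by
    intro x hx
    obtain ⟨hxS, hxB⟩ := hx
    have hxL : x ∈ L₁ := hxS.2
    apply le_ciInf
    intro j
    have hnot : x ∉ A (uvec j) := fun hmem => hxB (Set.mem_iUnion.2 ⟨j, hmem⟩)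
    have hsle : s ≤ |(inner ℝ x (uvec j) : ℝ)| := not_lt.1 hnot
    have h1 := hukey j x hxL
    have hδj : dG d L₁ (Lhat j₀) ≤ dG d L₁ (Lhat j) := hj₀ j (Finset.mem_univ j)
    have h2 : c * dG d L₁ (Lhat j₀) * s ≤ c * dG d L₁ (Lhat j) * |(inner ℝ x (uvec j) : ℝ)| :=
      mul_le_mul (mul_le_mul_of_nonneg_left hδj hcpos.le) hsle hs_pos.le
        (mul_nonneg hcpos.le (Real.sqrt_nonneg _))
    exact le_trans h2 h1
  have hIG : (c * dG d L₁ (Lhat j₀) * s) ^ p * (μ₁ Good).toReal ≤ ∫ x in Good, f x ∂μ₁ := by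
    rw [mul_comm, ← smul_eq_mul, ← measureReal_def]
    apply setIntegral_ge_of_const_le hGoodmeas (measure_ne_top μ₁ Good)
    · intro x hx
      exact Real.rpow_le_rpow (by positivity) (hkey x hx) hp.le
    · exact hfint.integrableOn
  have hGI : ∫ x in Good, f x ∂μ₁ ≤ ∫ x, f x ∂μ₁ :=
    setIntegral_le_integral hfint (Filter.Eventually.of_forall hfnn)
  have halg : ((1 - μ₀) * (2:ℝ) ^ (p - 1) * s ^ p / (Real.pi * Real.sqrt d) ^ p) * ε ^ p
      = (1 - μ₀)/2 * (c * ε * s) ^ p := by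
    rw [Real.mul_rpow (by positivity) hs_pos.le, Real.mul_rpow hcpos.le hε, hc,
      Real.div_rpow (by norm_num) (by positivity), Real.rpow_sub two_pos, Real.rpow_one]
    ring
  have hmono : (c * ε * s) ^ p < (c * dG d L₁ (Lhat j₀) * s) ^ p := by
    apply Real.rpow_lt_rpow (by positivity) _ hp
    apply mul_lt_mul_of_pos_right _ hs_pos
    exact mul_lt_mul_of_pos_left hδε hcpos
  calc ((1 - μ₀) * (2:ℝ) ^ (p - 1) * s ^ p / (Real.pi * Real.sqrt d) ^ p) * ε ^ p
      = (1 - μ₀)/2 * (c * ε * s) ^ p := halg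
    _ < (1 - μ₀)/2 * (c * dG d L₁ (Lhat j₀) * s) ^ p :=
        mul_lt_mul_of_pos_left hmono (by linarith)
    _ ≤ (μ₁ Good).toReal * (c * dG d L₁ (Lhat j₀) * s) ^ p :=
        mul_le_mul_of_nonneg_right hGoodlb (Real.rpow_nonneg (by positivity) p)
    _ = (c * dG d L₁ (Lhat j₀) * s) ^ p * (μ₁ Good).toReal := mul_comm _ _
    _ ≤ ∫ x in Good, f x ∂μ₁ := hIG
    _ ≤ ∫ x, f x ∂μ₁ := hGI
    _ = ∫ x, (⨅ j, Metric.infDist x (Lhat j : Set (E D))) ^ p ∂μ₁ := rfl
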